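/- Let n ≥ 2 and let 𝔤 be a Lie subalgebra of gl(n+1, ℝ) (closed under the matrix commutator) such that 𝔨 ⊆ 𝔤, such that 𝔤 is invariant under conjugation by [[R, 0], [0, 1]] for every R ∈ O(n), and such that 𝔤 ∩ 𝔪₀ = {0}. Then for every element [[0, b], [cᵀ, 0]] of 𝔤 (with b, c ∈ ℝⁿ), the vectors b and c are collinear, i.e. ‖b‖²‖c‖² = (bᵀc)². -/

import Mathlib

open Matrix

attribute [local instance 100] LieRing.ofAssociativeRing

noncomputable section

abbrev Idx (n : ℕ) := Fin n ⊕ Unit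

/-- 𝔨 = { [[A,0],[0,0]] : A skew-symmetric } -/
def kSet (n : ℕ) : Set (Matrix (Idx n) (Idx n) ℝ) :=
  { m | ∃ A : Matrix (Fin n) (Fin n) ℝ, Aᵀ = -A ∧ m = fromBlocks A 0 0 0 }

/-- 𝔪₀ = { [[λ·Iₙ,0],[0,μ]] } -/
def m0Set (n : ℕ) : Set (Matrix (Idx n) (Idx n) ℝ) :=
  { m | ∃ l μ : ℝ,
      m = fromBlocks (l • (1 : Matrix (Fin n) (Fin n) ℝ)) 0 0
        (μ • (1 : Matrix Unit Unit ℝ)) }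

namespace Stmt5Aux

variable {N : ℕ} {n : ℕ}

def sgn (ε : Fin N → Bool) (i : Fin N) : ℝ := if ε i then 1 else -1

lemma sgn_sq (ε : Fin N → Bool) (i : Fin N) : sgn ε i * sgn ε i = 1 := by
  unfold sgn; split <;> norm_num

def Rmat (ε : Fin (N + 1) → Bool) (k : Fin (N + 1)) :
    Matrix (Fin (N + 1)) (Fin (N + 1)) ℝ :=
  Matrix.of fun i j => if j = i - k then sgn ε i else 0

lemma Rmat_mul (ε : Fin (N + 1) → Bool) (k : Fin (N + 1))
    (X : Matrix (Fin (N + 1)) (Fin (N + 1)) ℝ) :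
    Rmat ε k * X = Matrix.of fun i j => sgn ε i * X (i - k) j := by
  ext i j
  simp [Rmat, Matrix.mul_apply, ite_mul]

lemma Rmat_conj (ε : Fin (N + 1) → Bool) (k : Fin (N + 1))
    (X : Matrix (Fin (N + 1)) (Fin (N + 1)) ℝ) :
    Rmat ε k * X * (Rmat ε k)ᵀ =
      Matrix.of fun i j => sgn ε i * sgn ε j * X (i - k) (j - k) := by
  rw [Rmat_mul]
  ext i j
  simp [Rmat, Matrix.mul_apply, mul_ite]
  ring

lemma Rmat_orth (ε : Fin (N + 1) → Bool) (k : Fin (N + 1)) :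
    (Rmat ε k)ᵀ * Rmat ε k = 1 := by
  ext i j
  have key : ∀ l : Fin (N + 1), (i = l - k) ↔ (l = i + k) := by
    intro l; constructor <;> (intro h; subst h; simp)
  simp only [Matrix.mul_apply, transpose_apply, Rmat, Matrix.of_apply]
  simp only [key]
  rw [Finset.sum_eq_single (i + k)]
  · by_cases h : j = i
    · simp [h, sgn_sq, Matrix.one_apply]
    · have : ¬ (j = i + k - k) := by simpa using fun hh => h (by simpa using hh)
      simp [this, Matrix.one_apply, Ne.symm h, h]
  · intro l _ hl
    simp [hl]
  · simp

lemma sum_sgn_ne {i j : Fin N} (h : i ≠ j) :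
    ∑ ε : Fin N → Bool, sgn ε i * sgn ε j = 0 := by
  have hφ : Function.Bijective (fun ε : Fin N → Bool => Function.update ε i (!ε i)) := by
    apply Function.Involutive.bijective
    intro ε
    simp only [Function.update_self]
    ext l
    by_cases hl : l = i
    · subst hl; simp
    · simp [Function.update_of_ne hl]
  have hcomp := hφ.sum_comp (fun ε => sgn ε i * sgn ε j)
  have hterm : ∀ ε : Fin N → Bool,
      sgn (Function.update ε i (!ε i)) i * sgn (Function.update ε i (!ε i)) j
        = -(sgn ε i * sgn ε j) := by
    intro ε
    have h1 : sgn (Function.update ε i (!ε i)) i = -(sgn ε i) := by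
      simp [sgn, Function.update_self]; cases ε i <;> simp
    have h2 : sgn (Function.update ε i (!ε i)) j = sgn ε j := by
      simp [sgn, Function.update_of_ne (Ne.symm h)]
    rw [h1, h2]; ring
  have h3 : ∑ ε : Fin N → Bool, sgn ε i * sgn ε j
      = -∑ ε : Fin N → Bool, sgn ε i * sgn ε j := by
    conv_lhs => rw [← hcomp]
    simp only [hterm]
    rw [Finset.sum_neg_distrib]
  linarith

lemma sum_diag (X : Matrix (Fin (N+1)) (Fin (N+1)) ℝ) (i : Fin (N+1)) :
    ∑ k : Fin (N+1), X (i - k) (i - k) = Matrix.trace X := by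
  rw [Matrix.trace]
  apply Fintype.sum_equiv (Equiv.subLeft i)
  intro k
  simp [Matrix.diag]

lemma avg (X : Matrix (Fin (N+1)) (Fin (N+1)) ℝ) :
    ∑ ε : Fin (N+1) → Bool, ∑ k : Fin (N+1),
      (Matrix.of fun i j => sgn ε i * sgn ε j * X (i - k) (j - k))
    = ((2:ℝ)^(N+1) * Matrix.trace X) • (1 : Matrix (Fin (N+1)) (Fin (N+1)) ℝ) := by
  ext i j
  rw [Matrix.sum_apply]
  simp only [Matrix.sum_apply, Matrix.of_apply, Matrix.smul_apply, Matrix.one_apply, smul_eq_mul]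
  have hfac : ∀ ε : Fin (N+1) → Bool, ∑ k : Fin (N+1), sgn ε i * sgn ε j * X (i - k) (j - k)
      = (sgn ε i * sgn ε j) * ∑ k, X (i - k) (j - k) := by
    intro ε; rw [Finset.mul_sum]
  simp only [hfac]
  rw [← Finset.sum_mul]
  by_cases h : i = j
  · subst h
    simp only [sgn_sq]
    rw [sum_diag]
    simp [Finset.sum_const, Finset.card_univ]
  · rw [sum_sgn_ne h]
    simp [h]

lemma sum_fromBlocks {ι : Type*} (s : Finset ι)
    (f : ι → Matrix (Fin n) (Fin n) ℝ) (m : Matrix Unit Unit ℝ) :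
    ∑ x ∈ s, fromBlocks (f x) 0 0 m
      = fromBlocks (∑ x ∈ s, f x) 0 0 ((s.card : ℝ) • m) := by
  ext (i | i) (j | j) <;>
    simp [Matrix.sum_apply, Finset.sum_const]

lemma block_inv (R : Matrix (Fin n) (Fin n) ℝ) (hR : Rᵀ * R = 1) :
    (fromBlocks R 0 0 (1 : Matrix Unit Unit ℝ))⁻¹
      = fromBlocks Rᵀ 0 0 (1 : Matrix Unit Unit ℝ) := by
  apply Matrix.inv_eq_right_inv
  rw [Matrix.fromBlocks_multiply]
  simp [mul_eq_one_comm.mp hR, Matrix.fromBlocks_one]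

lemma block_conj (R : Matrix (Fin n) (Fin n) ℝ)
    (X : Matrix (Fin n) (Fin n) ℝ) (m : Matrix Unit Unit ℝ) :
    fromBlocks R 0 0 (1 : Matrix Unit Unit ℝ) * fromBlocks X 0 0 m *
      fromBlocks Rᵀ 0 0 (1 : Matrix Unit Unit ℝ)
      = fromBlocks (R * X * Rᵀ) 0 0 m := by
  rw [Matrix.fromBlocks_multiply, Matrix.fromBlocks_multiply]
  simp

lemma fb_sub {l' : Type*} (A A' : Matrix (Fin n) (Fin n) ℝ) (B B' : Matrix (Fin n) l' ℝ)
    (C C' : Matrix l' (Fin n) ℝ) (D D' : Matrix l' l' ℝ) :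
    fromBlocks A B C D - fromBlocks A' B' C' D'
      = fromBlocks (A - A') (B - B') (C - C') (D - D') := by
  ext (i | i) (j | j) <;> simp

lemma bracket_eval (b c : Fin n → ℝ) :
    (⁅(fromBlocks 0 (replicateCol Unit b) (replicateRow Unit c) 0 : Matrix (Fin n ⊕ Unit) (Fin n ⊕ Unit) ℝ),
      ⁅(fromBlocks (replicateCol Unit b * replicateRow Unit c - replicateCol Unit c * replicateRow Unit b) 0 0 0 :
          Matrix (Fin n ⊕ Unit) (Fin n ⊕ Unit) ℝ),
        fromBlocks 0 (replicateCol Unit b) (replicateRow Unit c) 0⁆⁆)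
      = fromBlocks
          (-(replicateCol Unit b * replicateRow Unit c * (replicateCol Unit b * replicateRow Unit c - replicateCol Unit c * replicateRow Unit b))
            - (replicateCol Unit b * replicateRow Unit c - replicateCol Unit c * replicateRow Unit b) * (replicateCol Unit b * replicateRow Unit c)) 0 0
          (replicateRow Unit c * (replicateCol Unit b * replicateRow Unit c - replicateCol Unit c * replicateRow Unit b) * replicateCol Unit b
            + replicateRow Unit c * (replicateCol Unit b * replicateRow Unit c - replicateCol Unit c * replicateRow Unit b) * replicateCol Unit b) := by
  simp only [Ring.lie_def, Matrix.mul_sub, Matrix.sub_mul, Matrix.fromBlocks_multiply,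
    fb_sub, Matrix.mul_zero, Matrix.zero_mul, add_zero, zero_add, sub_zero, zero_sub]
  rw [Matrix.fromBlocks_inj]
  refine ⟨?_, rfl, rfl, ?_⟩ <;>
  · simp only [Matrix.mul_sub, Matrix.sub_mul, neg_smul, one_smul, two_smul, Matrix.mul_add,
      Matrix.mul_neg, Matrix.neg_mul, Matrix.add_mul, Matrix.mul_smul, Matrix.smul_mul,
      smul_smul, Matrix.mul_assoc, neg_add_rev, neg_neg]
    try abel

lemma corner_eval (b c : Fin n → ℝ) :
    (replicateRow Unit c * (replicateCol Unit b * replicateRow Unit c - replicateCol Unit c * replicateRow Unit b) * replicateCol Unit b) () ()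
      = (∑ i, b i * c i) ^ 2 - (∑ i, c i * c i) * (∑ i, b i * b i) := by
  simp only [Matrix.mul_apply, Matrix.sub_apply, Matrix.replicateCol_apply, Matrix.replicateRow_apply,
    sub_mul, mul_sub, Finset.sum_sub_distrib, Finset.sum_mul, Finset.mul_sum,
    Finset.univ_unique, Finset.sum_singleton]
  rw [sq, Finset.sum_mul_sum]
  congr 1 <;> (apply Finset.sum_congr rfl; intros; apply Finset.sum_congr rfl; intros; try ring)

end Stmt5Aux

open Stmt5Aux

theorem stmt5 (n : ℕ) (hn : 2 ≤ n)
    (𝔤 : LieSubalgebra ℝ (Matrix (Idx n) (Idx n) ℝ))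
    (hk : kSet n ⊆ (𝔤 : Set (Matrix (Idx n) (Idx n) ℝ)))
    (hinv : ∀ R : Matrix (Fin n) (Fin n) ℝ, Rᵀ * R = 1 →
      ∀ Z ∈ 𝔤, (fromBlocks R 0 0 (1 : Matrix Unit Unit ℝ)) * Z *
        (fromBlocks R 0 0 (1 : Matrix Unit Unit ℝ))⁻¹ ∈ 𝔤)
    (hm0 : (𝔤 : Set (Matrix (Idx n) (Idx n) ℝ)) ∩ m0Set n = {0}) :
    ∀ b c : Fin n → ℝ,
      fromBlocks 0 (replicateCol Unit b) (replicateRow Unit c) 0 ∈ 𝔤 →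
      (∑ i, b i ^ 2) * (∑ i, c i ^ 2) = (∑ i, b i * c i) ^ 2 := by
  obtain ⟨N, rfl⟩ : ∃ N, n = N + 1 := ⟨n - 1, by omega⟩
  intro b c hZ
  -- the skew matrix D = b cᵀ - c bᵀ
  set D : Matrix (Fin (N+1)) (Fin (N+1)) ℝ :=
    replicateCol Unit b * replicateRow Unit c - replicateCol Unit c * replicateRow Unit b with hD
  have hDskew : Dᵀ = -D := by
    rw [hD]
    rw [Matrix.transpose_sub, Matrix.transpose_mul, Matrix.transpose_mul]
    simp [Matrix.transpose_replicateCol, Matrix.transpose_replicateRow]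
  have hK : fromBlocks D 0 0 0 ∈ 𝔤 := hk ⟨D, hDskew, rfl⟩
  -- the element T = ⁅Z, ⁅K, Z⁆⁆ ∈ 𝔤
  set X0 : Matrix (Fin (N+1)) (Fin (N+1)) ℝ :=
    -(replicateCol Unit b * replicateRow Unit c * D) - D * (replicateCol Unit b * replicateRow Unit c) with hX0
  set mC : Matrix Unit Unit ℝ :=
    replicateRow Unit c * D * replicateCol Unit b + replicateRow Unit c * D * replicateCol Unit b with hmC
  have hT : fromBlocks X0 0 0 mC ∈ 𝔤 := by
    have := 𝔤.lie_mem hZ (𝔤.lie_mem hK hZ)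
    rwa [bracket_eval b c] at this
  -- conjugated copies
  have hconj : ∀ (ε : Fin (N+1) → Bool) (k : Fin (N+1)),
      fromBlocks (Rmat ε k * X0 * (Rmat ε k)ᵀ) 0 0 mC ∈ 𝔤 := by
    intro ε k
    have h := hinv (Rmat ε k) (Rmat_orth ε k) _ hT
    rwa [block_inv _ (Rmat_orth ε k), block_conj] at h
  -- the averaged element
  have hW : (∑ ε : Fin (N+1) → Bool, ∑ k : Fin (N+1),
      fromBlocks (Rmat ε k * X0 * (Rmat ε k)ᵀ) 0 0 mC) ∈ 𝔤 := by
    rw [← LieSubalgebra.mem_toSubmodule]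
    exact Submodule.sum_mem _ fun ε _ => Submodule.sum_mem _ fun k _ => hconj ε k
  have hWeq : (∑ ε : Fin (N+1) → Bool, ∑ k : Fin (N+1),
        fromBlocks (Rmat ε k * X0 * (Rmat ε k)ᵀ) 0 0 mC)
      = fromBlocks (((2:ℝ)^(N+1) * Matrix.trace X0) • 1) 0 0
          ((((2:ℝ)^(N+1) * (N+1)) * mC () ()) • (1 : Matrix Unit Unit ℝ)) := by
    simp only [Rmat_conj]
    have : ∀ ε : Fin (N+1) → Bool,
        (∑ k : Fin (N+1), fromBlocks
          (Matrix.of fun i j => sgn ε i * sgn ε j * X0 (i - k) (j - k)) 0 0 mC)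
        = fromBlocks (∑ k : Fin (N+1),
            Matrix.of fun i j => sgn ε i * sgn ε j * X0 (i - k) (j - k)) 0 0
            (((N+1 : ℕ) : ℝ) • mC) := by
      intro ε
      rw [sum_fromBlocks]
      simp
    simp only [this]
    rw [sum_fromBlocks, avg]
    have hc : (((Finset.univ : Finset (Fin (N+1) → Bool)).card : ℕ) : ℝ) = 2^(N+1) := by
      simp [Finset.card_univ]
    have hmc : mC = (mC () ()) • (1 : Matrix Unit Unit ℝ) := by
      ext i j; rcases i; rcases j; simp [Matrix.one_apply]
    have hcorn : (((Finset.univ : Finset (Fin (N+1) → Bool)).card : ℕ) : ℝ) • ((((N:ℕ)+1 : ℕ) : ℝ)) • mC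
        = (((2:ℝ)^(N+1) * (N+1)) * mC () ()) • (1 : Matrix Unit Unit ℝ) := by
      conv_lhs => rw [hmc]
      rw [hc, smul_smul, smul_smul]
      congr 1
      push_cast
      ring
    rw [hcorn]
  have hWm0 : fromBlocks (((2:ℝ)^(N+1) * Matrix.trace X0) • (1 : Matrix (Fin (N+1)) (Fin (N+1)) ℝ)) 0 0
      ((((2:ℝ)^(N+1) * (N+1)) * mC () ()) • (1 : Matrix Unit Unit ℝ)) = 0 := by
    have hmem : fromBlocks (((2:ℝ)^(N+1) * Matrix.trace X0) • (1 : Matrix (Fin (N+1)) (Fin (N+1)) ℝ)) 0 0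
        ((((2:ℝ)^(N+1) * (N+1)) * mC () ()) • (1 : Matrix Unit Unit ℝ))
        ∈ (𝔤 : Set (Matrix (Idx (N+1)) (Idx (N+1)) ℝ)) ∩ m0Set (N+1) := by
      constructor
      · rw [← hWeq]; exact hW
      · exact ⟨_, _, rfl⟩
    rw [hm0] at hmem
    exact hmem
  -- extract the corner entry
  have hcorner : mC () () = 0 := by
    have h := congrFun (congrFun hWm0 (Sum.inr ())) (Sum.inr ())
    rw [Matrix.fromBlocks_apply₂₂, Matrix.zero_apply, Matrix.smul_apply,
      Matrix.one_apply_eq, smul_eq_mul, mul_one] at h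
    have hne : ((2:ℝ)^(N+1) * ((N:ℕ)+1 : ℝ)) ≠ 0 := by positivity
    rcases mul_eq_zero.mp h with h' | h'
    · exact absurd (by linarith) hne
    · exact h' 
  -- evaluate the corner
  have heval : mC () () = 2 * ((∑ i, b i * c i) ^ 2 - (∑ i, c i * c i) * (∑ i, b i * b i)) := by
    rw [hmC, Matrix.add_apply, corner_eval]
    ring
  rw [heval] at hcorner
  have : (∑ i, b i * c i) ^ 2 = (∑ i, c i * c i) * (∑ i, b i * b i) := by linarith
  calc (∑ i, b i ^ 2) * (∑ i, c i ^ 2)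
      = (∑ i, c i * c i) * (∑ i, b i * b i) := by
        simp only [sq]; ring
    _ = (∑ i, b i * c i) ^ 2 := this.symm
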